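/- Let I be a fine normal ideal on κ such that E^κ_ω ∉ I. Then nonempty does not have a winning strategy in the ideal game on I. -/

import Mathlib

open Set

noncomputable section

namespace BMPDGames

/-- `I` is an ideal on the (regular uncountable) ordinal `κ`:  a collection of subsets of
`κ` containing all singletons, closed under subsets and finite unions, with `κ ∉ I`. -/
def IsIdealOn (κ : Ordinal) (I : Set (Set Ordinal)) : Prop :=
  (∀ A ∈ I, A ⊆ Set.Iio κ) ∧
  (∀ β < κ, ({β} : Set Ordinal) ∈ I) ∧
  (∀ A B : Set Ordinal, A ⊆ B → B ∈ I → A ∈ I) ∧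
  (∀ A ∈ I, ∀ B ∈ I, A ∪ B ∈ I) ∧
  Set.Iio κ ∉ I

/-- `I` is fine: every bounded subset of `κ` belongs to `I`. -/
def IsFineIdeal (κ : Ordinal) (I : Set (Set Ordinal)) : Prop :=
  ∀ A : Set Ordinal, A ⊆ Set.Iio κ → (∃ β < κ, A ⊆ Set.Iio β) → A ∈ I

/-- `I` is normal: the diagonal union of `κ` many members of `I` belongs to `I`. -/
def IsNormalIdeal (κ : Ordinal) (I : Set (Set Ordinal)) : Prop :=
  ∀ A : Ordinal → Set Ordinal, (∀ γ, γ < κ → A γ ∈ I) →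
    {β : Ordinal | β < κ ∧ ∃ γ < β, β ∈ A γ} ∈ I

/-- `I` is a fine normal ideal on `κ`. -/
def FineNormalIdeal (κ : Ordinal) (I : Set (Set Ordinal)) : Prop :=
  IsIdealOn κ I ∧ IsFineIdeal κ I ∧ IsNormalIdeal κ I

/-- `κ` is (as an ordinal) a regular uncountable cardinal. -/
def RegUncountable (κ : Ordinal) : Prop :=
  κ.card.IsRegular ∧ Cardinal.aleph0 < κ.card ∧ κ.card.ord = κ

/-- `C` is a club (closed unbounded) subset of `κ`: it is closed under suprema of its
bounded nonempty subsets and unbounded in `κ`. -/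
def IsClubIn (κ : Ordinal) (C : Set Ordinal) : Prop :=
  C ⊆ Set.Iio κ ∧
  (∀ D : Set Ordinal, D ⊆ C → D.Nonempty → sSup D < κ → sSup D ∈ C) ∧
  (∀ β, β < κ → ∃ γ ∈ C, β < γ)

/-- `S` is a stationary subset of `κ`: it meets every club. -/
def IsStationaryIn (κ : Ordinal) (S : Set Ordinal) : Prop :=
  S ⊆ Set.Iio κ ∧ ∀ C : Set Ordinal, IsClubIn κ C → (S ∩ C).Nonempty

/-- The nonstationary ideal on `κ`: subsets of `κ` disjoint from some club. -/
def NSIdeal (κ : Ordinal) : Set (Set Ordinal) :=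
  {A | A ⊆ Set.Iio κ ∧ ∃ C : Set Ordinal, IsClubIn κ C ∧ A ∩ C = ∅}

/-- `E^κ_ω`, the set of ordinals below `κ` of cofinality `ω`. -/
def Ecofomega (κ : Ordinal) : Set Ordinal :=
  {α : Ordinal | α < κ ∧ Ordinal.cof α = Cardinal.aleph0}

/-- The intersection of the values `T β` for `β < α`. -/
def InterBelow (T : Ordinal → Set Ordinal) (α : Ordinal) : Set Ordinal :=
  ⋂ β ∈ Set.Iio α, T β

/-! ### The Banach–Mazur game `BM_{<ζ}(I,S)` (empty moves first at every stage).

A strategy for a player is represented as a function giving that player's move at stage `α`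
as a function of the opponent's moves (it may only depend on the moves made before the
player's move at stage `α`, which is the first conjunct in each definition below).  A
strategy is winning if it always produces legal moves (as long as the opponent has played
legally and the game is not yet over) and every run in which the opponent plays legally is
won by the player. -/

/-- `σ` is a winning strategy for the player *empty* in `BM_{<ζ}(I,S)`.
Here `T : Ordinal → Set Ordinal` ranges over the sequences of moves of nonempty, and
empty's move at stage `α` is `σ α T`. Empty wins a run iff at some stage `α < ζ`
the intersection of all moves made before stage `α` belongs to `I`. -/
def EmptyBMStratWins (ζ : Ordinal) (I : Set (Set Ordinal)) (S : Set Ordinal)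
    (σ : Ordinal → (Ordinal → Set Ordinal) → Set Ordinal) : Prop :=
  (∀ (α : Ordinal) (T T' : Ordinal → Set Ordinal),
      (∀ β < α, T β = T' β) → σ α T = σ α T') ∧
  ∀ T : Ordinal → Set Ordinal,
    (∀ α < ζ, (∀ β < α, T β ∉ I ∧ T β ⊆ σ β T) → InterBelow T α ∉ I →
      σ α T ∉ I ∧ σ α T ⊆ S ∧ ∀ β < α, σ α T ⊆ T β) ∧
    ((∀ α < ζ, T α ∉ I ∧ T α ⊆ σ α T) → ∃ α < ζ, InterBelow T α ∈ I)

/-- Empty has a winning strategy in `BM_{<ζ}(I,S)`. -/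
def EmptyWinsBM (ζ : Ordinal) (I : Set (Set Ordinal)) (S : Set Ordinal) : Prop :=
  ∃ σ, EmptyBMStratWins ζ I S σ

/-- Nonempty has a winning strategy in `BM_{<ζ}(I,S)`.
Here `Sq : Ordinal → Set Ordinal` ranges over the sequences of moves of empty, and
nonempty's move at stage `α` is `τ α Sq`.  The strategy must respond legally to legal
play by empty, and guarantee that empty is never stuck, i.e. that the intersection of
all previous moves never lies in `I` at any stage `α < ζ`. -/
def NonemptyWinsBM (ζ : Ordinal) (I : Set (Set Ordinal)) (S : Set Ordinal) : Prop :=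
  ∃ τ : Ordinal → (Ordinal → Set Ordinal) → Set Ordinal,
    (∀ (α : Ordinal) (Sq Sq' : Ordinal → Set Ordinal),
        (∀ β ≤ α, Sq β = Sq' β) → τ α Sq = τ α Sq') ∧
    ∀ Sq : Ordinal → Set Ordinal, ∀ α, α < ζ →
      ((∀ β ≤ α, Sq β ∉ I ∧ Sq β ⊆ S ∧ ∀ γ < β, Sq β ⊆ Sq γ ∩ τ γ Sq) →
        τ α Sq ∉ I ∧ τ α Sq ⊆ Sq α) ∧
      ((∀ β < α, Sq β ∉ I ∧ Sq β ⊆ S ∧ ∀ γ < β, Sq β ⊆ Sq γ ∩ τ γ Sq) →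
        InterBelow (fun β => Sq β ∩ τ β Sq) α ∉ I)

/-! ### The variant `BM'_{<ζ}(I,S)` in which nonempty makes the first move at stage `0`
(playing an `I`-positive `T 0 ⊆ S`), after which play continues as in `BM` with empty
moving first at every later stage. -/

/-- `σ` is a winning strategy for empty in `BM'_{<ζ}(I,S)` (`σ` is only used at
stages `α > 0`, since nonempty alone moves at stage `0`). -/
def EmptyBMPrimeStratWins (ζ : Ordinal) (I : Set (Set Ordinal)) (S : Set Ordinal)
    (σ : Ordinal → (Ordinal → Set Ordinal) → Set Ordinal) : Prop :=
  (∀ (α : Ordinal) (T T' : Ordinal → Set Ordinal),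
      (∀ β < α, T β = T' β) → σ α T = σ α T') ∧
  ∀ T : Ordinal → Set Ordinal,
    (∀ α, 0 < α → α < ζ → (T 0 ∉ I ∧ T 0 ⊆ S) →
      (∀ β, 0 < β → β < α → T β ∉ I ∧ T β ⊆ σ β T) → InterBelow T α ∉ I →
      σ α T ∉ I ∧ ∀ β < α, σ α T ⊆ T β) ∧
    ((0 < ζ → T 0 ∉ I ∧ T 0 ⊆ S) → (∀ α, 0 < α → α < ζ → T α ∉ I ∧ T α ⊆ σ α T) →
      ∃ α < ζ, InterBelow T α ∈ I)

/-- Empty has a winning strategy in `BM'_{<ζ}(I,S)`. -/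
def EmptyWinsBMPrime (ζ : Ordinal) (I : Set (Set Ordinal)) (S : Set Ordinal) : Prop :=
  ∃ σ, EmptyBMPrimeStratWins ζ I S σ

/-- Nonempty has a winning strategy in `BM'_{<ζ}(I,S)`: a first move `T0` (an
`I`-positive subset of `S`, provided the game has any stage at all) together with
responses `τ α Sq` to empty's moves `Sq β` (`0 < β ≤ α`) at all later stages `α`. -/
def NonemptyWinsBMPrime (ζ : Ordinal) (I : Set (Set Ordinal)) (S : Set Ordinal) : Prop :=
  ∃ T0 : Set Ordinal, ∃ τ : Ordinal → (Ordinal → Set Ordinal) → Set Ordinal,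
    (0 < ζ → T0 ∉ I ∧ T0 ⊆ S) ∧
    (∀ (α : Ordinal) (Sq Sq' : Ordinal → Set Ordinal),
        (∀ β ≤ α, Sq β = Sq' β) → τ α Sq = τ α Sq') ∧
    ∀ Sq : Ordinal → Set Ordinal, ∀ α, 0 < α → α < ζ →
      ((∀ β, 0 < β → β ≤ α →
          Sq β ∉ I ∧ Sq β ⊆ T0 ∧ ∀ γ, 0 < γ → γ < β → Sq β ⊆ Sq γ ∩ τ γ Sq) →
        τ α Sq ∉ I ∧ τ α Sq ⊆ Sq α) ∧
      ((∀ β, 0 < β → β < α →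
          Sq β ∉ I ∧ Sq β ⊆ T0 ∧ ∀ γ, 0 < γ → γ < β → Sq β ⊆ Sq γ ∩ τ γ Sq) →
        (T0 ∩ ⋂ β ∈ Set.Ioo (0 : Ordinal) α, (Sq β ∩ τ β Sq)) ∉ I)

/-! ### The pressing down game `PD_{<ζ}(I,S)`.

At each stage `α < ζ` empty plays a regressive function `f_α : κ → κ` and nonempty plays
a set `T_α ⊆ S` contained in all previous `T_β` on which `f_α` is constant.  Empty wins a
run iff `T_α ∈ I` for some `α < ζ`. -/

/-- Empty has a winning strategy in `PD_{<ζ}(I,S)`: a (history-dependent) choice of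
regressive functions such that in every run in which nonempty plays legally, some move
of nonempty lies in `I`. -/
def EmptyWinsPD (ζ : Ordinal) (I : Set (Set Ordinal)) (S : Set Ordinal) : Prop :=
  ∃ σ : Ordinal → (Ordinal → Set Ordinal) → (Ordinal → Ordinal),
    (∀ (α : Ordinal) (T T' : Ordinal → Set Ordinal),
        (∀ β < α, T β = T' β) → σ α T = σ α T') ∧
    (∀ (α : Ordinal) (T : Ordinal → Set Ordinal) (β : Ordinal), 0 < β → σ α T β < β) ∧
    ∀ T : Ordinal → Set Ordinal,
      (∀ α, α < ζ →
        T α ⊆ S ∧ (∀ β < α, T α ⊆ T β) ∧ ∃ c, ∀ x ∈ T α, σ α T x = c) →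
      ∃ α, α < ζ ∧ T α ∈ I

/-- Nonempty has a winning strategy in `PD_{<ζ}(I,S)`: responses `τ α g` to the
sequence `g` of regressive functions played by empty, which are always legal
(homogeneous subsets of `S` and of all previous responses) and never lie in `I`. -/
def NonemptyWinsPD (ζ : Ordinal) (I : Set (Set Ordinal)) (S : Set Ordinal) : Prop :=
  ∃ τ : Ordinal → (Ordinal → (Ordinal → Ordinal)) → Set Ordinal,
    (∀ (α : Ordinal) (g g' : Ordinal → (Ordinal → Ordinal)),
        (∀ β ≤ α, g β = g' β) → τ α g = τ α g') ∧
    ∀ g : Ordinal → (Ordinal → Ordinal), (∀ α β, 0 < β → g α β < β) →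
      ∀ α, α < ζ →
        τ α g ⊆ S ∧ (∀ β < α, τ α g ⊆ τ β g) ∧ (∃ c, ∀ x ∈ τ α g, g α x = c) ∧
        τ α g ∉ I

/-! ### The games of length `ω + 1` on `κ`: `BM_{≤ω}(I,S)` and the ideal game.

In `BM_{≤ω}(I,S)` the players move at the finite stages `n < ω` and empty wins a run iff
`⋂_{n<ω} S_n ∈ I`; in the ideal game (played on `κ` itself) empty wins iff
`⋂_{n<ω} S_n = ∅`. -/

/-- `σ` is a winning strategy for empty in `BM_{≤ω}(I,S)`. -/
def EmptyBMOmegaStratWins (I : Set (Set Ordinal)) (S : Set Ordinal)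
    (σ : ℕ → (ℕ → Set Ordinal) → Set Ordinal) : Prop :=
  (∀ (n : ℕ) (T T' : ℕ → Set Ordinal), (∀ m < n, T m = T' m) → σ n T = σ n T') ∧
  ∀ T : ℕ → Set Ordinal,
    (∀ n, (∀ m < n, T m ∉ I ∧ T m ⊆ σ m T) →
      σ n T ∉ I ∧ σ n T ⊆ S ∧ ∀ m < n, σ n T ⊆ T m) ∧
    ((∀ n, T n ∉ I ∧ T n ⊆ σ n T) → (⋂ n, σ n T) ∈ I)

/-- Empty has a winning strategy in `BM_{≤ω}(I,S)`. -/
def EmptyWinsBMOmega (I : Set (Set Ordinal)) (S : Set Ordinal) : Prop :=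
  ∃ σ, EmptyBMOmegaStratWins I S σ

/-- Nonempty has a winning strategy in `BM_{≤ω}(I,S)`. -/
def NonemptyWinsBMOmega (I : Set (Set Ordinal)) (S : Set Ordinal) : Prop :=
  ∃ τ : ℕ → (ℕ → Set Ordinal) → Set Ordinal,
    (∀ (n : ℕ) (Sq Sq' : ℕ → Set Ordinal), (∀ m ≤ n, Sq m = Sq' m) → τ n Sq = τ n Sq') ∧
    ∀ Sq : ℕ → Set Ordinal,
      (∀ n, (∀ m ≤ n, Sq m ∉ I ∧ Sq m ⊆ S ∧ ∀ k < m, Sq m ⊆ Sq k ∩ τ k Sq) →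
        τ n Sq ∉ I ∧ τ n Sq ⊆ Sq n) ∧
      ((∀ n, Sq n ∉ I ∧ Sq n ⊆ S ∧ ∀ k < n, Sq n ⊆ Sq k ∩ τ k Sq) →
        (⋂ n, Sq n) ∉ I)

/-- Empty has a winning strategy in the ideal game on `I` (played on `κ`). -/
def EmptyWinsIdealGame (κ : Ordinal) (I : Set (Set Ordinal)) : Prop :=
  ∃ σ : ℕ → (ℕ → Set Ordinal) → Set Ordinal,
    (∀ (n : ℕ) (T T' : ℕ → Set Ordinal), (∀ m < n, T m = T' m) → σ n T = σ n T') ∧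
    ∀ T : ℕ → Set Ordinal,
      (∀ n, (∀ m < n, T m ∉ I ∧ T m ⊆ σ m T) →
        σ n T ∉ I ∧ σ n T ⊆ Set.Iio κ ∧ ∀ m < n, σ n T ⊆ T m) ∧
      ((∀ n, T n ∉ I ∧ T n ⊆ σ n T) → (⋂ n, σ n T) = ∅)

/-- Nonempty has a winning strategy in the ideal game on `I` (played on `κ`). -/
def NonemptyWinsIdealGame (κ : Ordinal) (I : Set (Set Ordinal)) : Prop :=
  ∃ τ : ℕ → (ℕ → Set Ordinal) → Set Ordinal,
    (∀ (n : ℕ) (Sq Sq' : ℕ → Set Ordinal), (∀ m ≤ n, Sq m = Sq' m) → τ n Sq = τ n Sq') ∧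
    ∀ Sq : ℕ → Set Ordinal,
      (∀ n, (∀ m ≤ n, Sq m ∉ I ∧ Sq m ⊆ Set.Iio κ ∧ ∀ k < m, Sq m ⊆ Sq k ∩ τ k Sq) →
        τ n Sq ∉ I ∧ τ n Sq ⊆ Sq n) ∧
      ((∀ n, Sq n ∉ I ∧ Sq n ⊆ Set.Iio κ ∧ ∀ k < n, Sq n ⊆ Sq k ∩ τ k Sq) →
        (⋂ n, Sq n).Nonempty)

/-! ### Auxiliary material for Statement 14 -/

section Statement14Aux

variable {κ : Ordinal} {I : Set (Set Ordinal)}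

private lemma idl_subset (hI : FineNormalIdeal κ I) {A B : Set Ordinal}
    (h : A ⊆ B) (hB : B ∈ I) : A ∈ I := hI.1.2.2.1 A B h hB

private lemma idl_union (hI : FineNormalIdeal κ I) {A B : Set Ordinal}
    (hA : A ∈ I) (hB : B ∈ I) : A ∪ B ∈ I := hI.1.2.2.2.1 A hA B hB

private lemma idl_diff (hI : FineNormalIdeal κ I) {A B : Set Ordinal}
    (hA : A ∉ I) (hB : B ∈ I) : A \ B ∉ I := fun h =>
  hA (idl_subset hI (fun x hx => by
    by_cases hxB : x ∈ B
    · exact Or.inr hxB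
    · exact Or.inl ⟨hx, hxB⟩) (idl_union hI h hB))

private lemma Iic_mem_idl (hI : FineNormalIdeal κ I) (hlim : Order.IsSuccLimit κ) {γ : Ordinal}
    (hγ : γ < κ) : Set.Iic γ ∈ I :=
  hI.2.1 (Set.Iic γ) (fun x hx => lt_of_le_of_lt hx hγ)
    ⟨Order.succ γ, hlim.succ_lt hγ,
      fun x hx => Set.mem_Iio.mpr (Order.lt_succ_iff.mpr (Set.mem_Iic.mp hx))⟩

private lemma empty_mem_idl (hI : FineNormalIdeal κ I) (h0 : (0 : Ordinal) < κ) :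
    (∅ : Set Ordinal) ∈ I :=
  idl_subset hI (Set.empty_subset _) (hI.1.2.1 0 h0)

/-- Fodor's lemma for a fine normal ideal. -/
private lemma fodor_idl (hI : FineNormalIdeal κ I) {B : Set Ordinal} (hB : B ∉ I)
    (hBκ : B ⊆ Set.Iio κ) {f : Ordinal → Ordinal} (hf : ∀ β ∈ B, f β < β) :
    ∃ γ, (B ∩ {β | f β = γ}) ∉ I := by
  by_contra h
  push_neg at h
  have hD := hI.2.2 (fun γ => B ∩ {β | f β = γ}) (fun γ _ => h γ)
  refine hB (idl_subset hI (fun β hβ => ?_) hD)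
  exact Set.mem_setOf_eq ▸ ⟨hBκ hβ, f β, hf β hβ, hβ, rfl⟩

/-- A fine normal ideal is closed under countable unions. -/
private lemma iUnion_mem_idl (hI : FineNormalIdeal κ I) (hlim : Order.IsSuccLimit κ)
    (homega : Ordinal.omega0 < κ) (A : ℕ → Set Ordinal) (hA : ∀ n, A n ∈ I) :
    (⋃ n, A n) ∈ I := by
  classical
  have hempty : (∅ : Set Ordinal) ∈ I := empty_mem_idl hI (Ordinal.omega0_pos.trans homega)
  set B : Ordinal → Set Ordinal := fun γ => {x | ∃ n : ℕ, (n : Ordinal) = γ ∧ x ∈ A n}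
    with hBdef
  have hBI : ∀ γ, γ < κ → B γ ∈ I := by
    intro γ _
    by_cases hγ : ∃ n : ℕ, (n : Ordinal) = γ
    · obtain ⟨n, hn⟩ := hγ
      refine idl_subset hI (fun x hx => ?_) (hA n)
      obtain ⟨m, hm, hxm⟩ := hx
      have hmn : m = n := by
        rcases lt_trichotomy m n with h | h | h
        · exact absurd (hm.trans hn.symm) (ne_of_lt (Nat.cast_lt.mpr h))
        · exact h
        · exact absurd (hn.trans hm.symm) (ne_of_lt (Nat.cast_lt.mpr h))
      exact hmn ▸ hxm
    · have : B γ = ∅ := by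
        ext x
        simp only [hBdef, Set.mem_setOf_eq, Set.mem_empty_iff_false, iff_false]
        rintro ⟨n, hn, -⟩
        exact hγ ⟨n, hn⟩
      rw [this]; exact hempty
  have hD := hI.2.2 B hBI
  refine idl_subset hI (fun x hx => ?_)
    (idl_union hI hD (Iic_mem_idl hI hlim homega))
  obtain ⟨n, hn⟩ := Set.mem_iUnion.mp hx
  have hxκ : x < κ := hI.1.1 (A n) (hA n) hn
  rcases lt_or_ge (n : Ordinal) x with hlt | hle
  · exact Or.inl ⟨hxκ, (n : Ordinal), hlt, n, rfl, hn⟩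
  · exact Or.inr (le_trans hle (Ordinal.nat_lt_omega0 n).le)

/-- Every ordinal of cofinality `ω` carries a cofinal `ω`-sequence. -/
private lemma exists_scale {α : Ordinal} (hα : α.cof = Cardinal.aleph0) :
    ∃ b : ℕ → Ordinal, (∀ n, b n < α) ∧ ∀ x < α, ∃ n, x ≤ b n := by
  obtain ⟨ι, f, hl, hmk⟩ := Ordinal.exists_lsub_cof α
  rw [hα] at hmk
  have hmk' : Cardinal.aleph0 = Cardinal.mk (ULift ℕ) := by
    rw [Cardinal.mk_uLift, Cardinal.mk_nat, Cardinal.lift_aleph0]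
  obtain ⟨e⟩ := Cardinal.eq.mp (hmk.trans hmk')
  refine ⟨fun n => f (e.symm (ULift.up n)), fun n => hl ▸ Ordinal.lt_lsub f _, fun x hx => ?_⟩
  obtain ⟨i, hi⟩ := Ordinal.lt_lsub_iff.mp (hl ▸ hx)
  refine ⟨(e i).down, ?_⟩
  show x ≤ f (e.symm (ULift.up (e i).down))
  rw [ULift.up_down, Equiv.symm_apply_apply]
  exact hi

private lemma iSup_scale {α : Ordinal} (hlima : Order.IsSuccLimit α) {f : ℕ → Ordinal}
    (h1 : ∀ n, f n < α) (h2 : ∀ x < α, ∃ n, x ≤ f n) : (⨆ n, f n) = α := by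
  refine le_antisymm (ciSup_le fun n => (h1 n).le) (le_of_forall_lt fun x hx => ?_)
  obtain ⟨n, hn⟩ := h2 _ (hlima.succ_lt hx)
  exact lt_of_lt_of_le (lt_of_lt_of_le (Order.lt_succ x) hn)
    (le_ciSup (Ordinal.bddAbove_range _) n)

private lemma limit_of_mem_E {α : Ordinal} (hα : α ∈ Ecofomega κ) : Order.IsSuccLimit α :=
  Ordinal.aleph0_le_cof.mp (le_of_eq hα.2.symm)

/-- Below a positive set of `ω`-cofinal ordinals there are two disjoint positive sets. -/
private lemma exists_disjoint_pos (hI : FineNormalIdeal κ I) (hE : Ecofomega κ ∉ I)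
    (hlim : Order.IsSuccLimit κ) (homega : Ordinal.omega0 < κ)
    {b : Ordinal → ℕ → Ordinal}
    (hb1 : ∀ α ∈ Ecofomega κ, ∀ n, b α n < α)
    (hb2 : ∀ α ∈ Ecofomega κ, ∀ x < α, ∃ n, x ≤ b α n) :
    ∃ X0 X1 : Set Ordinal, X0 ⊆ Ecofomega κ ∧ X1 ⊆ Ecofomega κ ∧
      X0 ∉ I ∧ X1 ∉ I ∧ X0 ∩ X1 = ∅ := by
  by_contra hsplit
  push_neg at hsplit
  have key : ∀ Y, Y ⊆ Ecofomega κ → Y ∉ I → Ecofomega κ \ Y ∈ I := by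
    intro Y hYE hY
    by_contra hc
    obtain ⟨x, hx⟩ := hsplit Y (Ecofomega κ \ Y) hYE Set.diff_subset hY hc
    exact hx.2.2 hx.1
  have hEκ : Ecofomega κ ⊆ Set.Iio κ := fun x hx => hx.1
  have hlev : ∀ n : ℕ, ∃ γ, (Ecofomega κ ∩ {α | b α n = γ}) ∉ I := fun n =>
    fodor_idl hI hE hEκ (fun β hβ => hb1 β hβ n)
  choose g hg using hlev
  have hcomp : ∀ n, Ecofomega κ \ (Ecofomega κ ∩ {α | b α n = g n}) ∈ I := fun n =>
    key _ Set.inter_subset_left (hg n)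
  have hU := iUnion_mem_idl hI hlim homega _ hcomp
  by_cases hex : ∃ x ∈ Ecofomega κ, ∀ n, b x n = g n
  · obtain ⟨x, hxE, hbx⟩ := hex
    have hsing : ({x} : Set Ordinal) ∈ I := hI.1.2.1 x hxE.1
    refine hE (idl_subset hI (fun y hyE => ?_) (idl_union hI hU hsing))
    by_cases hy : ∀ n, b y n = g n
    · right
      have h1 : (⨆ n, b y n) = y := iSup_scale (limit_of_mem_E hyE) (hb1 y hyE) (hb2 y hyE)
      have h2 : (⨆ n, b x n) = x := iSup_scale (limit_of_mem_E hxE) (hb1 x hxE) (hb2 x hxE)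
      have : y = x := by
        rw [← h1, ← h2]
        congr 1
        funext n
        rw [hy n, hbx n]
      exact Set.mem_singleton_iff.mpr this
    · left
      push_neg at hy
      obtain ⟨n, hn⟩ := hy
      exact Set.mem_iUnion.mpr ⟨n, hyE, fun hc => hn hc.2⟩
  · push_neg at hex
    refine hE (idl_subset hI (fun y hyE => ?_) hU)
    obtain ⟨n, hn⟩ := hex y hyE
    exact Set.mem_iUnion.mpr ⟨n, hyE, fun hc => hn hc.2⟩

/-- The pair of plays by empty against the strategy `τ`, pressing down the scales `b`,
starting from `X0` and `X1` respectively.  The last component is the current cut point. -/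
private def RunPair (I : Set (Set Ordinal)) (τ : ℕ → (ℕ → Set Ordinal) → Set Ordinal)
    (b : Ordinal → ℕ → Ordinal) (X0 X1 : Set Ordinal) :
    ℕ → (ℕ → Set Ordinal) × (ℕ → Set Ordinal) × Ordinal
  | 0 => (fun k => if k = 0 then X0 else ∅, fun k => if k = 0 then X1 else ∅, 0)
  | n + 1 =>
    let p := RunPair I τ b X0 X1 n
    let γ0 := sInf {γ | (τ n p.1 ∩ {α | b α n = γ}) \ Set.Iic p.2.2 ∉ I}
    let γ1 := sInf {γ | (τ n p.2.1 ∩ {α | b α n = γ}) \ Set.Iic p.2.2 ∉ I}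
    let c := max p.2.2 (max γ0 γ1)
    (Function.update p.1 (n + 1) ((τ n p.1 ∩ {α | b α n = γ0}) \ Set.Iic c),
     Function.update p.2.1 (n + 1) ((τ n p.2.1 ∩ {α | b α n = γ1}) \ Set.Iic c),
     c)

variable (I) in
private def Sq0f (τ : ℕ → (ℕ → Set Ordinal) → Set Ordinal)
    (b : Ordinal → ℕ → Ordinal) (X0 X1 : Set Ordinal) : ℕ → Set Ordinal :=
  fun n => (RunPair I τ b X0 X1 n).1 n

variable (I) in
private def Sq1f (τ : ℕ → (ℕ → Set Ordinal) → Set Ordinal)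
    (b : Ordinal → ℕ → Ordinal) (X0 X1 : Set Ordinal) : ℕ → Set Ordinal :=
  fun n => (RunPair I τ b X0 X1 n).2.1 n

variable (I) in
private def cutf (τ : ℕ → (ℕ → Set Ordinal) → Set Ordinal)
    (b : Ordinal → ℕ → Ordinal) (X0 X1 : Set Ordinal) : ℕ → Ordinal :=
  fun n => (RunPair I τ b X0 X1 n).2.2

variable (I) in
private def gam0 (τ : ℕ → (ℕ → Set Ordinal) → Set Ordinal)
    (b : Ordinal → ℕ → Ordinal) (X0 X1 : Set Ordinal) : ℕ → Ordinal :=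
  fun n => sInf {γ | (τ n (Sq0f I τ b X0 X1) ∩ {α | b α n = γ}) \
    Set.Iic (cutf I τ b X0 X1 n) ∉ I}

variable (I) in
private def gam1 (τ : ℕ → (ℕ → Set Ordinal) → Set Ordinal)
    (b : Ordinal → ℕ → Ordinal) (X0 X1 : Set Ordinal) : ℕ → Ordinal :=
  fun n => sInf {γ | (τ n (Sq1f I τ b X0 X1) ∩ {α | b α n = γ}) \
    Set.Iic (cutf I τ b X0 X1 n) ∉ I}

section RunLemmas

variable {τ : ℕ → (ℕ → Set Ordinal) → Set Ordinal}
  {b : Ordinal → ℕ → Ordinal} {X0 X1 : Set Ordinal}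

private lemma runPair_fst_stable : ∀ {n m : ℕ}, m ≤ n →
    (RunPair I τ b X0 X1 n).1 m = Sq0f I τ b X0 X1 m := by
  intro n
  induction n with
  | zero =>
    intro m hm
    have : m = 0 := Nat.le_zero.mp hm
    subst this; rfl
  | succ n ih =>
    intro m hm
    rcases Nat.lt_or_ge m (n + 1) with h1 | h2
    · have hm' : m ≤ n := Nat.lt_succ_iff.mp h1
      have : (RunPair I τ b X0 X1 (n + 1)).1 m = (RunPair I τ b X0 X1 n).1 m := by
        simp only [RunPair]
        exact Function.update_of_ne (by omega) _ _
      rw [this]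
      exact ih hm'
    · have : m = n + 1 := le_antisymm hm h2
      subst this; rfl

private lemma runPair_snd_stable : ∀ {n m : ℕ}, m ≤ n →
    (RunPair I τ b X0 X1 n).2.1 m = Sq1f I τ b X0 X1 m := by
  intro n
  induction n with
  | zero =>
    intro m hm
    have : m = 0 := Nat.le_zero.mp hm
    subst this; rfl
  | succ n ih =>
    intro m hm
    rcases Nat.lt_or_ge m (n + 1) with h1 | h2
    · have hm' : m ≤ n := Nat.lt_succ_iff.mp h1
      have : (RunPair I τ b X0 X1 (n + 1)).2.1 m = (RunPair I τ b X0 X1 n).2.1 m := by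
        simp only [RunPair]
        exact Function.update_of_ne (by omega) _ _
      rw [this]
      exact ih hm'
    · have : m = n + 1 := le_antisymm hm h2
      subst this; rfl

private lemma tau_bridge0 (hdep : ∀ (n : ℕ) (Sq Sq' : ℕ → Set Ordinal),
    (∀ m ≤ n, Sq m = Sq' m) → τ n Sq = τ n Sq') (n : ℕ) :
    τ n (RunPair I τ b X0 X1 n).1 = τ n (Sq0f I τ b X0 X1) :=
  hdep n _ _ fun m hm => runPair_fst_stable hm

private lemma tau_bridge1 (hdep : ∀ (n : ℕ) (Sq Sq' : ℕ → Set Ordinal),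
    (∀ m ≤ n, Sq m = Sq' m) → τ n Sq = τ n Sq') (n : ℕ) :
    τ n (RunPair I τ b X0 X1 n).2.1 = τ n (Sq1f I τ b X0 X1) :=
  hdep n _ _ fun m hm => runPair_snd_stable hm

private lemma runPair_succ (hdep : ∀ (n : ℕ) (Sq Sq' : ℕ → Set Ordinal),
    (∀ m ≤ n, Sq m = Sq' m) → τ n Sq = τ n Sq') (n : ℕ) :
    RunPair I τ b X0 X1 (n + 1) =
      (Function.update (RunPair I τ b X0 X1 n).1 (n + 1)
        ((τ n (Sq0f I τ b X0 X1) ∩ {α | b α n = gam0 I τ b X0 X1 n}) \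
          Set.Iic (max (cutf I τ b X0 X1 n)
            (max (gam0 I τ b X0 X1 n) (gam1 I τ b X0 X1 n)))),
       Function.update (RunPair I τ b X0 X1 n).2.1 (n + 1)
        ((τ n (Sq1f I τ b X0 X1) ∩ {α | b α n = gam1 I τ b X0 X1 n}) \
          Set.Iic (max (cutf I τ b X0 X1 n)
            (max (gam0 I τ b X0 X1 n) (gam1 I τ b X0 X1 n)))),
       max (cutf I τ b X0 X1 n)
         (max (gam0 I τ b X0 X1 n) (gam1 I τ b X0 X1 n))) := by
  show RunPair I τ b X0 X1 (n + 1) = _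
  simp only [RunPair, gam0, gam1, cutf, tau_bridge0 hdep, tau_bridge1 hdep]

private lemma cutf_succ (hdep : ∀ (n : ℕ) (Sq Sq' : ℕ → Set Ordinal),
    (∀ m ≤ n, Sq m = Sq' m) → τ n Sq = τ n Sq') (n : ℕ) :
    cutf I τ b X0 X1 (n + 1) =
      max (cutf I τ b X0 X1 n)
        (max (gam0 I τ b X0 X1 n) (gam1 I τ b X0 X1 n)) := by
  show (RunPair I τ b X0 X1 (n + 1)).2.2 = _
  rw [runPair_succ hdep]

private lemma Sq0f_succ (hdep : ∀ (n : ℕ) (Sq Sq' : ℕ → Set Ordinal),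
    (∀ m ≤ n, Sq m = Sq' m) → τ n Sq = τ n Sq') (n : ℕ) :
    Sq0f I τ b X0 X1 (n + 1) =
      (τ n (Sq0f I τ b X0 X1) ∩ {α | b α n = gam0 I τ b X0 X1 n}) \
        Set.Iic (cutf I τ b X0 X1 (n + 1)) := by
  rw [cutf_succ hdep]
  show (RunPair I τ b X0 X1 (n + 1)).1 (n + 1) = _
  rw [runPair_succ hdep]
  exact Function.update_self _ _ _

private lemma Sq1f_succ (hdep : ∀ (n : ℕ) (Sq Sq' : ℕ → Set Ordinal),
    (∀ m ≤ n, Sq m = Sq' m) → τ n Sq = τ n Sq') (n : ℕ) :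
    Sq1f I τ b X0 X1 (n + 1) =
      (τ n (Sq1f I τ b X0 X1) ∩ {α | b α n = gam1 I τ b X0 X1 n}) \
        Set.Iic (cutf I τ b X0 X1 (n + 1)) := by
  rw [cutf_succ hdep]
  show (RunPair I τ b X0 X1 (n + 1)).2.1 (n + 1) = _
  rw [runPair_succ hdep]
  exact Function.update_self _ _ _

private lemma Sq0f_zero : Sq0f I τ b X0 X1 0 = X0 := by
  show (RunPair I τ b X0 X1 0).1 0 = X0
  simp [RunPair]

private lemma Sq1f_zero : Sq1f I τ b X0 X1 0 = X1 := by
  show (RunPair I τ b X0 X1 0).2.1 0 = X1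
  simp [RunPair]

private lemma cutf_zero : cutf I τ b X0 X1 0 = 0 := rfl

end RunLemmas


/-- Legality of the constructed pair of runs. -/
private lemma run_legal
    (hI : FineNormalIdeal κ I) (hlim : Order.IsSuccLimit κ) (homega : Ordinal.omega0 < κ)
    {τ : ℕ → (ℕ → Set Ordinal) → Set Ordinal}
    (hdep : ∀ (n : ℕ) (Sq Sq' : ℕ → Set Ordinal),
      (∀ m ≤ n, Sq m = Sq' m) → τ n Sq = τ n Sq')
    (hplay : ∀ Sq : ℕ → Set Ordinal,
      ∀ n, (∀ m ≤ n, Sq m ∉ I ∧ Sq m ⊆ Set.Iio κ ∧ ∀ k < m, Sq m ⊆ Sq k ∩ τ k Sq) →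
        τ n Sq ∉ I ∧ τ n Sq ⊆ Sq n)
    {b : Ordinal → ℕ → Ordinal}
    (hb1 : ∀ α ∈ Ecofomega κ, ∀ n, b α n < α)
    {X0 X1 : Set Ordinal} (hX0E : X0 ⊆ Ecofomega κ) (hX1E : X1 ⊆ Ecofomega κ)
    (hX0 : X0 ∉ I) (hX1 : X1 ∉ I) :
    ∀ n : ℕ,
      (Sq0f I τ b X0 X1 n ∉ I ∧ Sq0f I τ b X0 X1 n ⊆ Ecofomega κ ∧
        ∀ k < n, Sq0f I τ b X0 X1 n ⊆ Sq0f I τ b X0 X1 k ∩ τ k (Sq0f I τ b X0 X1)) ∧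
      (Sq1f I τ b X0 X1 n ∉ I ∧ Sq1f I τ b X0 X1 n ⊆ Ecofomega κ ∧
        ∀ k < n, Sq1f I τ b X0 X1 n ⊆ Sq1f I τ b X0 X1 k ∩ τ k (Sq1f I τ b X0 X1)) ∧
      cutf I τ b X0 X1 n < κ := by
  have hEκ : Ecofomega κ ⊆ Set.Iio κ := fun x hx => hx.1
  have h0κ : (0 : Ordinal) < κ := Ordinal.omega0_pos.trans homega
  have hempty := empty_mem_idl hI h0κ
  suffices H : ∀ n : ℕ, ∀ m ≤ n,
      (Sq0f I τ b X0 X1 m ∉ I ∧ Sq0f I τ b X0 X1 m ⊆ Ecofomega κ ∧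
        ∀ k < m, Sq0f I τ b X0 X1 m ⊆ Sq0f I τ b X0 X1 k ∩ τ k (Sq0f I τ b X0 X1)) ∧
      (Sq1f I τ b X0 X1 m ∉ I ∧ Sq1f I τ b X0 X1 m ⊆ Ecofomega κ ∧
        ∀ k < m, Sq1f I τ b X0 X1 m ⊆ Sq1f I τ b X0 X1 k ∩ τ k (Sq1f I τ b X0 X1)) ∧
      cutf I τ b X0 X1 m < κ by
    exact fun n => H n n le_rfl
  intro n
  induction n with
  | zero =>
    intro m hm
    have hm0 : m = 0 := Nat.le_zero.mp hm
    subst hm0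
    refine ⟨⟨?_, ?_, ?_⟩, ⟨?_, ?_, ?_⟩, ?_⟩
    · rw [Sq0f_zero]; exact hX0
    · rw [Sq0f_zero]; exact hX0E
    · intro k hk; exact absurd hk (Nat.not_lt_zero k)
    · rw [Sq1f_zero]; exact hX1
    · rw [Sq1f_zero]; exact hX1E
    · intro k hk; exact absurd hk (Nat.not_lt_zero k)
    · rw [cutf_zero]; exact h0κ
  | succ n ih =>
    intro m hm
    rcases lt_or_eq_of_le hm with hm' | hm'
    · exact ih m (Nat.lt_succ_iff.mp hm')
    · subst hm'
      have hcut : cutf I τ b X0 X1 n < κ := (ih n le_rfl).2.2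
      have hSq0E : Sq0f I τ b X0 X1 n ⊆ Ecofomega κ := (ih n le_rfl).1.2.1
      have hSq1E : Sq1f I τ b X0 X1 n ⊆ Ecofomega κ := (ih n le_rfl).2.1.2.1
      have hτ0 := hplay (Sq0f I τ b X0 X1) n (fun m hm =>
        ⟨(ih m hm).1.1, subset_trans (ih m hm).1.2.1 hEκ, (ih m hm).1.2.2⟩)
      have hτ1 := hplay (Sq1f I τ b X0 X1) n (fun m hm =>
        ⟨(ih m hm).2.1.1, subset_trans (ih m hm).2.1.2.1 hEκ, (ih m hm).2.1.2.2⟩)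
      have hT0E : τ n (Sq0f I τ b X0 X1) ⊆ Ecofomega κ := subset_trans hτ0.2 hSq0E
      have hT1E : τ n (Sq1f I τ b X0 X1) ⊆ Ecofomega κ := subset_trans hτ1.2 hSq1E
      -- positivity of the chosen levels
      have hpos0 : (τ n (Sq0f I τ b X0 X1) ∩ {α | b α n = gam0 I τ b X0 X1 n}) \
          Set.Iic (cutf I τ b X0 X1 n) ∉ I := by
        have hB0 : τ n (Sq0f I τ b X0 X1) \ Set.Iic (cutf I τ b X0 X1 n) ∉ I :=
          idl_diff hI hτ0.1 (Iic_mem_idl hI hlim hcut)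
        obtain ⟨γ0, hγ0⟩ := fodor_idl hI hB0 (fun x hx => hEκ (hT0E hx.1))
          (f := fun α => b α n) (fun β hβ => hb1 β (hT0E hβ.1) n)
        have hset : (τ n (Sq0f I τ b X0 X1) \ Set.Iic (cutf I τ b X0 X1 n)) ∩
            {β | b β n = γ0} =
            (τ n (Sq0f I τ b X0 X1) ∩ {α | b α n = γ0}) \ Set.Iic (cutf I τ b X0 X1 n) := by
          ext x
          constructor
          · rintro ⟨⟨h1, h2⟩, h3⟩; exact ⟨⟨h1, h3⟩, h2⟩
          · rintro ⟨⟨h1, h3⟩, h2⟩; exact ⟨⟨h1, h2⟩, h3⟩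
        rw [hset] at hγ0
        have hne : {γ | (τ n (Sq0f I τ b X0 X1) ∩ {α | b α n = γ}) \
            Set.Iic (cutf I τ b X0 X1 n) ∉ I}.Nonempty := ⟨γ0, hγ0⟩
        exact csInf_mem hne
      have hpos1 : (τ n (Sq1f I τ b X0 X1) ∩ {α | b α n = gam1 I τ b X0 X1 n}) \
          Set.Iic (cutf I τ b X0 X1 n) ∉ I := by
        have hB1 : τ n (Sq1f I τ b X0 X1) \ Set.Iic (cutf I τ b X0 X1 n) ∉ I :=
          idl_diff hI hτ1.1 (Iic_mem_idl hI hlim hcut)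
        obtain ⟨γ1, hγ1⟩ := fodor_idl hI hB1 (fun x hx => hEκ (hT1E hx.1))
          (f := fun α => b α n) (fun β hβ => hb1 β (hT1E hβ.1) n)
        have hset : (τ n (Sq1f I τ b X0 X1) \ Set.Iic (cutf I τ b X0 X1 n)) ∩
            {β | b β n = γ1} =
            (τ n (Sq1f I τ b X0 X1) ∩ {α | b α n = γ1}) \ Set.Iic (cutf I τ b X0 X1 n) := by
          ext x
          constructor
          · rintro ⟨⟨h1, h2⟩, h3⟩; exact ⟨⟨h1, h3⟩, h2⟩
          · rintro ⟨⟨h1, h3⟩, h2⟩; exact ⟨⟨h1, h2⟩, h3⟩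
        rw [hset] at hγ1
        have hne : {γ | (τ n (Sq1f I τ b X0 X1) ∩ {α | b α n = γ}) \
            Set.Iic (cutf I τ b X0 X1 n) ∉ I}.Nonempty := ⟨γ1, hγ1⟩
        exact csInf_mem hne
      -- the chosen values are below κ
      have hgam0κ : gam0 I τ b X0 X1 n < κ := by
        obtain ⟨y, hy⟩ : ((τ n (Sq0f I τ b X0 X1) ∩ {α | b α n = gam0 I τ b X0 X1 n}) \
            Set.Iic (cutf I τ b X0 X1 n)).Nonempty :=
          Set.nonempty_iff_ne_empty.mpr (fun h => hpos0 (h ▸ hempty))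
        have hyE : y ∈ Ecofomega κ := hT0E hy.1.1
        have hby : b y n < y := hb1 y hyE n
        rw [hy.1.2] at hby
        exact hby.trans hyE.1
      have hgam1κ : gam1 I τ b X0 X1 n < κ := by
        obtain ⟨y, hy⟩ : ((τ n (Sq1f I τ b X0 X1) ∩ {α | b α n = gam1 I τ b X0 X1 n}) \
            Set.Iic (cutf I τ b X0 X1 n)).Nonempty :=
          Set.nonempty_iff_ne_empty.mpr (fun h => hpos1 (h ▸ hempty))
        have hyE : y ∈ Ecofomega κ := hT1E hy.1.1
        have hby : b y n < y := hb1 y hyE n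
        rw [hy.1.2] at hby
        exact hby.trans hyE.1
      have hcut' : cutf I τ b X0 X1 (n + 1) < κ := by
        rw [cutf_succ hdep]
        exact max_lt hcut (max_lt hgam0κ hgam1κ)
      -- the new moves are positive
      have hpos0' : Sq0f I τ b X0 X1 (n + 1) ∉ I := by
        rw [Sq0f_succ hdep]
        intro hmem
        refine hpos0 (idl_subset hI (fun x hx => ?_)
          (idl_union hI hmem (Iic_mem_idl hI hlim hcut')))
        by_cases hxc : x ∈ Set.Iic (cutf I τ b X0 X1 (n + 1))
        · exact Or.inr hxc
        · exact Or.inl ⟨hx.1, hxc⟩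
      have hpos1' : Sq1f I τ b X0 X1 (n + 1) ∉ I := by
        rw [Sq1f_succ hdep]
        intro hmem
        refine hpos1 (idl_subset hI (fun x hx => ?_)
          (idl_union hI hmem (Iic_mem_idl hI hlim hcut')))
        by_cases hxc : x ∈ Set.Iic (cutf I τ b X0 X1 (n + 1))
        · exact Or.inr hxc
        · exact Or.inl ⟨hx.1, hxc⟩
      have hsub0 : Sq0f I τ b X0 X1 (n + 1) ⊆ τ n (Sq0f I τ b X0 X1) := by
        rw [Sq0f_succ hdep]; exact fun x hx => hx.1.1
      have hsub1 : Sq1f I τ b X0 X1 (n + 1) ⊆ τ n (Sq1f I τ b X0 X1) := by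
        rw [Sq1f_succ hdep]; exact fun x hx => hx.1.1
      refine ⟨⟨hpos0', subset_trans hsub0 hT0E, ?_⟩,
        ⟨hpos1', subset_trans hsub1 hT1E, ?_⟩, hcut'⟩
      · intro k hk
        rcases Nat.lt_succ_iff_lt_or_eq.mp hk with hk' | hk'
        · intro x hx
          exact (ih n le_rfl).1.2.2 k hk' (hτ0.2 (hsub0 hx))
        · subst hk'
          exact fun x hx => ⟨hτ0.2 (hsub0 hx), hsub0 hx⟩
      · intro k hk
        rcases Nat.lt_succ_iff_lt_or_eq.mp hk with hk' | hk'
        · intro x hx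
          exact (ih n le_rfl).2.1.2.2 k hk' (hτ1.2 (hsub1 hx))
        · subst hk'
          exact fun x hx => ⟨hτ1.2 (hsub1 hx), hsub1 hx⟩

end Statement14Aux

/-- If `E^κ_ω ∉ I`, then nonempty has no winning strategy in the ideal
game on `I`. -/
theorem statement14 (κ : Ordinal) (I : Set (Set Ordinal))
    (hκ : RegUncountable κ) (hI : FineNormalIdeal κ I)
    (hE : Ecofomega κ ∉ I) :
    ¬ NonemptyWinsIdealGame κ I := by
  rintro ⟨τ, hdep, hplay⟩
  obtain ⟨hregc, haleph, hord⟩ := hκ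
  have hlim : Order.IsSuccLimit κ := by
    rw [← hord]; exact Cardinal.isSuccLimit_ord haleph.le
  have homega : Ordinal.omega0 < κ := by
    rw [← hord, ← Cardinal.ord_aleph0]; exact Cardinal.ord_lt_ord.mpr haleph
  have hscale : ∀ α ∈ Ecofomega κ,
      ∃ f : ℕ → Ordinal, (∀ n, f n < α) ∧ ∀ x < α, ∃ n, x ≤ f n :=
    fun α hα => exists_scale hα.2
  choose! b hb1 hb2 using fun α (hα : α ∈ Ecofomega κ) => hscale α hα
  obtain ⟨X0, X1, hX0E, hX1E, hX0, hX1, hdisj⟩ :=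
    exists_disjoint_pos hI hE hlim homega hb1 hb2
  have hleg := run_legal hI hlim homega hdep (fun Sq => (hplay Sq).1) hb1
    hX0E hX1E hX0 hX1
  have hEκ : Ecofomega κ ⊆ Set.Iio κ := fun x hx => hx.1
  obtain ⟨s0, hs0⟩ := (hplay (Sq0f I τ b X0 X1)).2 (fun n =>
    ⟨(hleg n).1.1, subset_trans (hleg n).1.2.1 hEκ, (hleg n).1.2.2⟩)
  obtain ⟨s1, hs1⟩ := (hplay (Sq1f I τ b X0 X1)).2 (fun n =>
    ⟨(hleg n).2.1.1, subset_trans (hleg n).2.1.2.1 hEκ, (hleg n).2.1.2.2⟩)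
  have hs0n : ∀ n, s0 ∈ Sq0f I τ b X0 X1 n := fun n => Set.mem_iInter.mp hs0 n
  have hs1n : ∀ n, s1 ∈ Sq1f I τ b X0 X1 n := fun n => Set.mem_iInter.mp hs1 n
  have hs0X : s0 ∈ X0 := by have := hs0n 0; rwa [Sq0f_zero] at this
  have hs1X : s1 ∈ X1 := by have := hs1n 0; rwa [Sq1f_zero] at this
  have hs0E : s0 ∈ Ecofomega κ := hX0E hs0X
  have hs1E : s1 ∈ Ecofomega κ := hX1E hs1X
  have hfact0 : ∀ n, b s0 n = gam0 I τ b X0 X1 n ∧ cutf I τ b X0 X1 (n + 1) < s0 := by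
    intro n
    have h := hs0n (n + 1)
    rw [Sq0f_succ hdep] at h
    exact ⟨h.1.2, not_le.mp (fun hc => h.2 hc)⟩
  have hfact1 : ∀ n, b s1 n = gam1 I τ b X0 X1 n ∧ cutf I τ b X0 X1 (n + 1) < s1 := by
    intro n
    have h := hs1n (n + 1)
    rw [Sq1f_succ hdep] at h
    exact ⟨h.1.2, not_le.mp (fun hc => h.2 hc)⟩
  have hsup0 : (⨆ n, gam0 I τ b X0 X1 n) = s0 := by
    have : (⨆ n, gam0 I τ b X0 X1 n) = ⨆ n, b s0 n := by
      congr 1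
      funext n
      exact ((hfact0 n).1).symm
    rw [this]
    exact iSup_scale (limit_of_mem_E hs0E) (hb1 s0 hs0E) (hb2 s0 hs0E)
  have hsup1 : (⨆ n, gam1 I τ b X0 X1 n) = s1 := by
    have : (⨆ n, gam1 I τ b X0 X1 n) = ⨆ n, b s1 n := by
      congr 1
      funext n
      exact ((hfact1 n).1).symm
    rw [this]
    exact iSup_scale (limit_of_mem_E hs1E) (hb1 s1 hs1E) (hb2 s1 hs1E)
  have hg0c : ∀ n, gam0 I τ b X0 X1 n ≤ cutf I τ b X0 X1 (n + 1) := by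
    intro n
    rw [cutf_succ hdep]
    exact le_trans (le_max_left _ _) (le_max_right _ _)
  have hg1c : ∀ n, gam1 I τ b X0 X1 n ≤ cutf I τ b X0 X1 (n + 1) := by
    intro n
    rw [cutf_succ hdep]
    exact le_trans (le_max_right _ _) (le_max_right _ _)
  have hle01 : s0 ≤ s1 := by
    rw [← hsup0]
    exact ciSup_le fun n => le_of_lt (lt_of_le_of_lt (hg0c n) (hfact1 n).2)
  have hle10 : s1 ≤ s0 := by
    rw [← hsup1]
    exact ciSup_le fun n => le_of_lt (lt_of_le_of_lt (hg1c n) (hfact0 n).2)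
  have heq : s0 = s1 := le_antisymm hle01 hle10
  have : s0 ∈ X0 ∩ X1 := ⟨hs0X, heq ▸ hs1X⟩
  rw [hdisj] at this
  exact this

end BMPDGames
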